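/- Suppose for each opportunity i ∈ 𝒜, the maximum of (v_{ij})_{j∈S} is attained by at least two distinct searchers (or all v_{ij}=0). Then in every core allocation of the game v̄(A)=Σ_i max_{j∈A} v_{ij}, every searcher receives 0 and the validator receives v̄(S). -/

import Mathlib

/-- If for every opportunity the maximum value is attained by at least two distinct searchers
(or all values are zero), then in every core allocation each searcher receives 0 and the
validator receives the full block value. -/
theorem full_competition_validator_gets_all
    {S A : Type*} [Fintype S] [Fintype A] [DecidableEq S] [DecidableEq A]
    (w : A → S → NNReal)
    (htwo : ∀ i : A, (∀ j : S, w i j = 0) ∨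
      ∃ j k : S, j ≠ k ∧ w i j = Finset.univ.sup (w i) ∧ w i k = Finset.univ.sup (w i))
    (vbar : Finset S → ℝ)
    (hvbar : ∀ T : Finset S, vbar T = ∑ i : A, ((T.sup (w i) : NNReal) : ℝ))
    (v : Finset (Option S) → ℝ)
    (hv : ∀ C : Finset (Option S), v C = if none ∈ C then vbar C.eraseNone else 0)
    (x : Option S → ℝ)
    (hx0 : ∀ j, 0 ≤ x j)
    (heff : ∑ j, x j = vbar Finset.univ)
    (hcore : ∀ C : Finset (Option S), v C ≤ ∑ j ∈ C, x j) :
    (∀ j : S, x (some j) = 0) ∧ x none = vbar Finset.univ := by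
  have hsup : ∀ (i : A) (j : S), (Finset.univ.erase j).sup (w i) = Finset.univ.sup (w i) := by
    intro i j
    rcases htwo i with h0 | ⟨a, b, hab, ha, hb⟩
    · have h1 : Finset.univ.sup (w i) = 0 := by
        apply le_antisymm _ zero_le
        apply Finset.sup_le; intro c _; simp [h0 c]
      rw [h1]
      apply le_antisymm _ zero_le
      apply Finset.sup_le; intro c _; simp [h0 c]
    · apply le_antisymm (Finset.sup_mono (Finset.erase_subset _ _))
      rcases ne_or_eq a j with h | h
      · calc Finset.univ.sup (w i) = w i a := ha.symm
          _ ≤ _ := Finset.le_sup (Finset.mem_erase.mpr ⟨h, Finset.mem_univ _⟩)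
      · calc Finset.univ.sup (w i) = w i b := hb.symm
          _ ≤ _ := Finset.le_sup (Finset.mem_erase.mpr ⟨fun hbj => hab (h.trans hbj.symm), Finset.mem_univ _⟩)
  have hvb : ∀ j : S, vbar (Finset.univ.erase j) = vbar Finset.univ := by
    intro j
    rw [hvbar, hvbar]
    exact Finset.sum_congr rfl fun i _ => by rw [hsup i j]
  have hxj : ∀ j : S, x (some j) = 0 := by
    intro j
    have hc := hcore (Finset.univ.erase (some j))
    have hmem : (none : Option S) ∈ Finset.univ.erase (some j) := by simp
    have heN : (Finset.univ.erase (some j)).eraseNone = Finset.univ.erase j := by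
      ext a; simp [Finset.mem_eraseNone]
    rw [hv, if_pos hmem, heN, hvb] at hc
    have hsum : ∑ c ∈ Finset.univ.erase (some j), x c + x (some j) = ∑ c, x c :=
      Finset.sum_erase_add _ _ (Finset.mem_univ _)
    rw [heff] at hsum
    have := hx0 (some j)
    linarith
  refine ⟨hxj, ?_⟩
  have := Fintype.sum_option x
  rw [heff] at this
  simp only [hxj, Finset.sum_const_zero, add_zero] at this
  linarith
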